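/- Let θ : ℤ²∖{0} → ℝ be radially symmetric (θ_k = θ_j whenever |k| = |j|) and have finite support, and let f : ℝ² → ℝ be twice differentiable at a point x ∈ ℝ². Then ∑_{k∈ℤ²∖{0}} θ_k² |k|⁻² ⟨k⊥, (Hess f)(x) · k⊥⟩ = (1/2) (∑_{k∈ℤ²∖{0}} θ_k²) · Δf(x), where Hess f(x) is the Hessian matrix of f at x and Δf(x) is its trace (the Laplacian). -/
import Mathlib

/-- Rotation by 90 degrees on nonzero lattice points. -/
def rot90 : {k : ℤ × ℤ // k ≠ 0} ≃ {k : ℤ × ℤ // k ≠ 0} where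
  toFun k := ⟨(-k.1.2, k.1.1), by
    obtain ⟨⟨a, b⟩, h⟩ := k
    simp only [ne_eq, Prod.ext_iff, Prod.fst_zero, Prod.snd_zero] at h ⊢
    omega⟩
  invFun k := ⟨(k.1.2, -k.1.1), by
    obtain ⟨⟨a, b⟩, h⟩ := k
    simp only [ne_eq, Prod.ext_iff, Prod.fst_zero, Prod.snd_zero] at h ⊢
    omega⟩
  left_inv k := by ext <;> simp
  right_inv k := by ext <;> simp

lemma bilin_expand (A : (ℝ × ℝ) →L[ℝ] ((ℝ × ℝ) →L[ℝ] ℝ)) (a b : ℝ) :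
    A (b, -a) (b, -a) + A (a, b) (a, b)
      = (a ^ 2 + b ^ 2) * (A (1, 0) (1, 0) + A (0, 1) (0, 1)) := by
  have h1 : ((b : ℝ), -a) = b • ((1 : ℝ), (0 : ℝ)) + (-a) • ((0 : ℝ), (1 : ℝ)) := by
    simp [Prod.ext_iff]
  have h2 : ((a : ℝ), b) = a • ((1 : ℝ), (0 : ℝ)) + b • ((0 : ℝ), (1 : ℝ)) := by
    simp [Prod.ext_iff]
  rw [h1, h2]
  simp only [map_add, map_smul, ContinuousLinearMap.add_apply,
    ContinuousLinearMap.smul_apply, smul_eq_mul]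
  ring

/-- Let `θ : ℤ²∖{0} → ℝ` be radially symmetric and finitely supported,
and let `f : ℝ² → ℝ` be twice differentiable at `x`. Then
`∑ θ_k² |k|⁻² ⟨k⊥, Hess f(x) k⊥⟩ = (1/2) (∑ θ_k²) Δf(x)`,
where `Δf(x)` is the trace of the Hessian. -/
theorem stmt_1
    (θ : {k : ℤ × ℤ // k ≠ 0} → ℝ)
    (hrad : ∀ k j : {k : ℤ × ℤ // k ≠ 0},
      Real.sqrt ((k.1.1 : ℝ) ^ 2 + (k.1.2 : ℝ) ^ 2)
        = Real.sqrt ((j.1.1 : ℝ) ^ 2 + (j.1.2 : ℝ) ^ 2) → θ k = θ j)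
    (hfin : (Function.support θ).Finite)
    (f : ℝ × ℝ → ℝ) (x : ℝ × ℝ)
    (hf : DifferentiableAt ℝ f x)
    (hf' : DifferentiableAt ℝ (fderiv ℝ f) x) :
    ∑' k : {k : ℤ × ℤ // k ≠ 0},
      (θ k) ^ 2 / ((k.1.1 : ℝ) ^ 2 + (k.1.2 : ℝ) ^ 2) *
        (fderiv ℝ (fderiv ℝ f) x ((k.1.2 : ℝ), -(k.1.1 : ℝ)) ((k.1.2 : ℝ), -(k.1.1 : ℝ)))
      = (1 / 2) * (∑' k : {k : ℤ × ℤ // k ≠ 0}, (θ k) ^ 2) *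
          (fderiv ℝ (fderiv ℝ f) x ((1 : ℝ), (0 : ℝ)) ((1 : ℝ), (0 : ℝ))
            + fderiv ℝ (fderiv ℝ f) x ((0 : ℝ), (1 : ℝ)) ((0 : ℝ), (1 : ℝ))) := by
  classical
  set A := fderiv ℝ (fderiv ℝ f) x with hA
  set T := A (1, 0) (1, 0) + A (0, 1) (0, 1) with hT
  set g : {k : ℤ × ℤ // k ≠ 0} → ℝ := fun k =>
    (θ k) ^ 2 / ((k.1.1 : ℝ) ^ 2 + (k.1.2 : ℝ) ^ 2) *
      (A ((k.1.2 : ℝ), -(k.1.1 : ℝ)) ((k.1.2 : ℝ), -(k.1.1 : ℝ))) with hg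
  have hnz : ∀ k : {k : ℤ × ℤ // k ≠ 0}, ((k.1.1 : ℝ) ^ 2 + (k.1.2 : ℝ) ^ 2) ≠ 0 := by
    rintro ⟨⟨a, b⟩, h⟩
    simp only [ne_eq, Prod.ext_iff, Prod.fst_zero, Prod.snd_zero] at h
    intro hc
    have ha : (a : ℝ) = 0 ∧ (b : ℝ) = 0 := by
      constructor <;> nlinarith [sq_nonneg (a : ℝ), sq_nonneg (b : ℝ)]
    exact h ⟨by exact_mod_cast ha.1, by exact_mod_cast ha.2⟩
  have hθrot : ∀ k, θ (rot90 k) = θ k := by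
    intro k
    apply hrad
    obtain ⟨⟨a, b⟩, h⟩ := k
    simp only [rot90, Equiv.coe_fn_mk, Int.cast_neg]
    ring_nf
  have hkey : ∀ k, g k + g (rot90 k) = (θ k) ^ 2 * T := by
    rintro k
    have hb := bilin_expand A (k.1.1 : ℝ) (k.1.2 : ℝ)
    have h2 : ((k.1.1 : ℝ) ^ 2 + (k.1.2 : ℝ) ^ 2) ≠ 0 := hnz k
    have hθ := hθrot k
    obtain ⟨⟨a, b⟩, h⟩ := k
    simp only [hg, rot90, Equiv.coe_fn_mk, Int.cast_neg, neg_neg] at *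
    rw [hθ]
    have e1 : (-(b : ℝ)) ^ 2 + (a : ℝ) ^ 2 = (a : ℝ) ^ 2 + (b : ℝ) ^ 2 := by ring
    rw [e1]
    have e2 : θ ⟨(a, b), h⟩ ^ 2 / ((a : ℝ) ^ 2 + (b : ℝ) ^ 2) * (A ((b : ℝ), -(a : ℝ))) ((b : ℝ), -(a : ℝ)) +
        θ ⟨(a, b), h⟩ ^ 2 / ((a : ℝ) ^ 2 + (b : ℝ) ^ 2) * (A ((a : ℝ), (b : ℝ))) ((a : ℝ), (b : ℝ))
        = θ ⟨(a, b), h⟩ ^ 2 / ((a : ℝ) ^ 2 + (b : ℝ) ^ 2) *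
          ((A ((b : ℝ), -(a : ℝ))) ((b : ℝ), -(a : ℝ)) + (A ((a : ℝ), (b : ℝ))) ((a : ℝ), (b : ℝ))) := by
      ring
    rw [e2, hb]
    field_simp
    ring
  -- summability
  have hsg : Summable g := by
    apply summable_of_ne_finset_zero (s := hfin.toFinset)
    intro k hk
    have : θ k = 0 := by
      by_contra hne
      exact hk (hfin.mem_toFinset.mpr hne)
    simp [hg, this]
  have hsθ : Summable (fun k => (θ k) ^ 2) := by
    apply summable_of_ne_finset_zero (s := hfin.toFinset)
    intro k hk
    have : θ k = 0 := by
      by_contra hne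
      exact hk (hfin.mem_toFinset.mpr hne)
    simp [this]
  have hsgr : Summable (fun k => g (rot90 k)) :=
    (rot90.summable_iff (f := g)).mpr hsg
  have hrot : ∑' k, g (rot90 k) = ∑' k, g k := rot90.tsum_eq g
  have h2S : (∑' k, g k) + (∑' k, g k) = (∑' k, (θ k) ^ 2) * T := by
    have h1 : (∑' k, (g k + g (rot90 k))) = (∑' k, g k) + (∑' k, g (rot90 k)) :=
      Summable.tsum_add hsg hsgr
    rw [hrot] at h1
    rw [← h1, tsum_congr hkey, tsum_mul_right]
  show (∑' k, g k) = 1 / 2 * (∑' k, (θ k) ^ 2) * T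
  linear_combination h2S / 2
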